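/- Fix β > 1, θ₀ ∈ ℝ^d, m = tanh(βm) with m > 0, and let the mixture P_{θ₀} be as above. Then E_{P_{θ₀}}[X Xᵀ tanh(βm + θ₀ᵀX)] = m(I_d + θ₀θ₀ᵀ). -/

import Mathlib

open MeasureTheory
open scoped RealInnerProductSpace ENNReal
open Real Filter
open scoped NNReal


lemma neg_sq_half (y : ℝ) : -y^2/2 = -(2⁻¹ : ℝ) * y^2 := by ring

lemma int_exp : Integrable (fun y : ℝ => Real.exp (-y^2/2)) := by
  simp_rw [neg_sq_half]; exact integrable_exp_neg_mul_sq (by norm_num)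

lemma int_mul_exp : Integrable (fun y : ℝ => y * Real.exp (-y^2/2)) := by
  simp_rw [neg_sq_half]; exact integrable_mul_exp_neg_mul_sq (by norm_num)

lemma int_sq_exp : Integrable (fun y : ℝ => y^2 * Real.exp (-y^2/2)) := by
  simp_rw [neg_sq_half]
  have := integrable_rpow_mul_exp_neg_mul_sq (b := 2⁻¹) (by norm_num) (s := 2) (by norm_num)
  simpa [Real.rpow_natCast] using this

lemma J0 : ∫ y : ℝ, Real.exp (-y^2/2) = Real.sqrt (2*Real.pi) := by
  simp_rw [neg_sq_half]
  rw [integral_gaussian]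
  norm_num [Real.pi_nonneg, div_eq_mul_inv, mul_comm]

lemma J1 : ∫ y : ℝ, y * Real.exp (-y^2/2) = 0 := by
  have h := MeasureTheory.integral_neg_eq_self (fun y : ℝ => y * Real.exp (-y^2/2)) volume
  simp only [neg_sq, neg_mul] at h
  rw [MeasureTheory.integral_neg] at h
  linarith

lemma tendsto_g : Filter.Tendsto (fun x : ℝ => -(x * Real.exp (-x^2/2))) (Filter.cocompact ℝ) (nhds 0) := by
  have h := tendsto_rpow_abs_mul_exp_neg_mul_sq_cocompact (a := 2⁻¹) (by norm_num) 1
  simp only [Real.rpow_one] at h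
  apply squeeze_zero_norm _ h
  intro x
  simp [abs_mul, abs_of_nonneg (Real.exp_pos _).le, neg_sq_half, le_refl]

lemma deriv_g (x : ℝ) : HasDerivAt (fun x : ℝ => -(x * Real.exp (-x^2/2)))
    (x^2 * Real.exp (-x^2/2) - Real.exp (-x^2/2)) x := by
  have h1 : HasDerivAt (fun x : ℝ => -x^2/2) (-x) x := by
    have h := ((hasDerivAt_pow 2 x).neg.div_const 2)
    norm_num at h
    exact h.congr_deriv (by ring)
  have h2 := ((hasDerivAt_id x).mul h1.exp).neg
  exact h2.congr_deriv (by simp only [id]; ring)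

lemma J2 : ∫ y : ℝ, y^2 * Real.exp (-y^2/2) = ∫ y : ℝ, Real.exp (-y^2/2) := by
  have h := MeasureTheory.integral_of_hasDerivAt_of_tendsto deriv_g
    (int_sq_exp.sub int_exp)
    (tendsto_g.mono_left ?_) (tendsto_g.mono_left ?_)
  · rw [MeasureTheory.integral_sub int_sq_exp int_exp] at h
    linarith
  · rw [cocompact_eq_atBot_atTop]; exact le_sup_left
  · rw [cocompact_eq_atBot_atTop]; exact le_sup_right

lemma int_exp_shift (c : ℝ) : Integrable (fun y : ℝ => Real.exp (-(y - c)^2/2)) :=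
  int_exp.comp_sub_right c

lemma int_mul_exp_shift (c : ℝ) : Integrable (fun y : ℝ => y * Real.exp (-(y - c)^2/2)) := by
  have h : Integrable (fun y : ℝ => (y + c) * Real.exp (-y^2/2)) := by
    simp_rw [add_mul]
    exact int_mul_exp.add (int_exp.const_mul c)
  have h2 := h.comp_sub_right c
  simpa using h2

lemma int_sq_exp_shift (c : ℝ) : Integrable (fun y : ℝ => y^2 * Real.exp (-(y - c)^2/2)) := by
  have h : Integrable (fun y : ℝ => (y + c)^2 * Real.exp (-y^2/2)) := by
    have : ∀ y : ℝ, (y + c)^2 * Real.exp (-y^2/2)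
        = y^2 * Real.exp (-y^2/2) + (2*c) * (y * Real.exp (-y^2/2)) + c^2 * Real.exp (-y^2/2) := by
      intro y; ring
    simp_rw [this]
    exact (int_sq_exp.add (int_mul_exp.const_mul _)).add (int_exp.const_mul _)
  have h2 := h.comp_sub_right c
  simpa using h2

lemma M0 (c : ℝ) : ∫ y : ℝ, Real.exp (-(y - c)^2/2) = Real.sqrt (2*Real.pi) := by
  rw [integral_sub_right_eq_self (fun y : ℝ => Real.exp (-y^2/2)) c]; exact J0

lemma M1 (c : ℝ) : ∫ y : ℝ, y * Real.exp (-(y - c)^2/2) = c * Real.sqrt (2*Real.pi) := by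
  rw [← integral_add_right_eq_self (fun y : ℝ => y * Real.exp (-(y - c)^2/2)) c]
  simp only [add_sub_cancel_right]
  simp_rw [add_mul]
  rw [integral_add int_mul_exp (int_exp.const_mul c), J1, integral_const_mul, J0]
  ring

lemma M2 (c : ℝ) : ∫ y : ℝ, y^2 * Real.exp (-(y - c)^2/2) = (1 + c^2) * Real.sqrt (2*Real.pi) := by
  rw [← integral_add_right_eq_self (fun y : ℝ => y^2 * Real.exp (-(y - c)^2/2)) c]
  simp only [add_sub_cancel_right]
  have : ∀ y : ℝ, (y + c)^2 * Real.exp (-y^2/2)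
      = y^2 * Real.exp (-y^2/2) + (2*c) * (y * Real.exp (-y^2/2)) + c^2 * Real.exp (-y^2/2) := by
    intro y; ring
  simp_rw [this]
  have hI1 : Integrable (fun y : ℝ => y ^ 2 * Real.exp (-y ^ 2 / 2) + 2 * c * (y * Real.exp (-y ^ 2 / 2))) :=
    int_sq_exp.add (int_mul_exp.const_mul (2*c))
  rw [integral_add hI1 (int_exp.const_mul (c^2)),
    integral_add int_sq_exp (int_mul_exp.const_mul (2*c)), integral_const_mul, integral_const_mul,
    J1, J2, J0]
  ring

lemma tanh_lt_one' (x : ℝ) : Real.tanh x < 1 := by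
  rw [Real.tanh_eq_sinh_div_cosh, div_lt_one (Real.cosh_pos x)]
  nlinarith [Real.sinh_lt_cosh x]

lemma key_identity (s t : ℝ) :
    Real.tanh (s + t) * ((1 + Real.tanh s) * Real.exp t + (1 - Real.tanh s) * Real.exp (-t))
      = (1 + Real.tanh s) * Real.exp t - (1 - Real.tanh s) * Real.exp (-t) := by
  rw [Real.tanh_eq_sinh_div_cosh, Real.tanh_eq_sinh_div_cosh]
  have h1 : Real.cosh (s + t) ≠ 0 := (Real.cosh_pos _).ne'
  have h2 : Real.cosh s ≠ 0 := (Real.cosh_pos _).ne'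
  field_simp
  simp only [Real.sinh_eq, Real.cosh_eq, Real.exp_neg, Real.exp_add]
  have e1 := (Real.exp_pos s).ne'
  have e2 := (Real.exp_pos t).ne'
  field_simp
  ring

/-- The multivariate Gaussian measure `N_d(μ, I_d)` on `ℝ^d`. -/
noncomputable def gaussian (d : ℕ) (μ : EuclideanSpace ℝ (Fin d)) :
    Measure (EuclideanSpace ℝ (Fin d)) :=
  volume.withDensity
    (fun x => ENNReal.ofReal ((2 * Real.pi) ^ (-(d : ℝ) / 2) * Real.exp (-‖x - μ‖ ^ 2 / 2)))

/-- The asymmetric two-component Gaussian mixture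
`P_{θ₀} = ((1+m)/2) N_d(θ₀, I_d) + ((1−m)/2) N_d(−θ₀, I_d)`. -/
noncomputable def asymMix (d : ℕ) (θ₀ : EuclideanSpace ℝ (Fin d)) (m : ℝ) :
    Measure (EuclideanSpace ℝ (Fin d)) :=
  ENNReal.ofReal ((1 + m) / 2) • gaussian d θ₀ + ENNReal.ofReal ((1 - m) / 2) • gaussian d (-θ₀)




noncomputable def ρ (d : ℕ) (μ : EuclideanSpace ℝ (Fin d)) (x : EuclideanSpace ℝ (Fin d)) : ℝ :=
  (2 * Real.pi) ^ (-(d : ℝ) / 2) * Real.exp (-‖x - μ‖ ^ 2 / 2)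

lemma ρ_nonneg (d μ x) : 0 ≤ ρ d μ x := by
  apply mul_nonneg (Real.rpow_nonneg (by positivity) _) (Real.exp_pos _).le

lemma ρ_cont (d : ℕ) (μ : EuclideanSpace ℝ (Fin d)) : Continuous (ρ d μ) := by
  unfold ρ; fun_prop

lemma norm_sq_eq_sum (d : ℕ) (x : EuclideanSpace ℝ (Fin d)) :
    ‖x‖ ^ 2 = ∑ k, (x k) ^ 2 := by
  rw [EuclideanSpace.norm_eq, Real.sq_sqrt (by positivity)]
  simp [Real.norm_eq_abs, sq_abs]

lemma const_pow (d : ℕ) : (2 * Real.pi) ^ (-(d : ℝ) / 2) = ((Real.sqrt (2*Real.pi))⁻¹) ^ d := by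
  have h2π : (0:ℝ) < 2 * Real.pi := by positivity
  rw [Real.sqrt_eq_rpow, ← Real.rpow_neg_one, ← Real.rpow_natCast _ d, ← Real.rpow_mul h2π.le,
    ← Real.rpow_mul h2π.le]
  norm_num
  ring_nf

lemma ρ_prod (d : ℕ) (μ x : EuclideanSpace ℝ (Fin d)) :
    ρ d μ x = ∏ k, ((Real.sqrt (2*Real.pi))⁻¹ * Real.exp (-(x k - μ k)^2/2)) := by
  rw [Finset.prod_mul_distrib, Finset.prod_const, ← Real.exp_sum]
  unfold ρ
  rw [const_pow]
  congr 2
  · simp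
  · rw [norm_sq_eq_sum]
    have h : ∀ k, (x - μ) k = x k - μ k := fun k => rfl
    simp_rw [h]
    rw [← Finset.sum_div, Finset.sum_neg_distrib]

lemma gaussian_density_eq (d : ℕ) (μ : EuclideanSpace ℝ (Fin d)) :
    gaussian d μ = volume.withDensity (fun x => ((ρ d μ x).toNNReal : ℝ≥0∞)) := rfl

lemma integral_gaussian_eq (d : ℕ) (μ : EuclideanSpace ℝ (Fin d))
    (f : EuclideanSpace ℝ (Fin d) → ℝ) :
    ∫ x, f x ∂(gaussian d μ) = ∫ x, ρ d μ x * f x := by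
  rw [gaussian_density_eq,
    integral_withDensity_eq_integral_smul ((ρ_cont d μ).measurable.real_toNNReal) f]
  congr 1; ext x
  rw [NNReal.smul_def, Real.coe_toNNReal _ (ρ_nonneg d μ x), smul_eq_mul]

lemma integrable_gaussian_iff (d : ℕ) (μ : EuclideanSpace ℝ (Fin d))
    (f : EuclideanSpace ℝ (Fin d) → ℝ) :
    Integrable f (gaussian d μ) ↔ Integrable (fun x => ρ d μ x * f x) volume := by
  rw [gaussian_density_eq,
    integrable_withDensity_iff_integrable_smul ((ρ_cont d μ).measurable.real_toNNReal)]
  constructor <;> intro h <;> refine h.congr (Filter.Eventually.of_forall fun x => ?_) <;>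
    simp only [NNReal.smul_def, Real.coe_toNNReal _ (ρ_nonneg d μ x), smul_eq_mul]

lemma euclid_integral_prod (d : ℕ) (g : Fin d → ℝ → ℝ) :
    ∫ x : EuclideanSpace ℝ (Fin d), ∏ k, g k (x k) = ∏ k, ∫ y : ℝ, g k y := by
  have mp := (EuclideanSpace.volume_preserving_symm_measurableEquiv_toLp (Fin d)).symm
  rw [← mp.integral_comp' (g := fun x : EuclideanSpace ℝ (Fin d) => ∏ k, g k (x k))]
  have h : ∀ y : Fin d → ℝ, (∏ k, g k (((MeasurableEquiv.toLp 2 (Fin d → ℝ)).symm.symm y) k))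
      = ∏ k, g k (y k) := fun y => rfl
  simp_rw [h]
  exact MeasureTheory.integral_fintype_prod_eq_prod (ι := Fin d) g

lemma euclid_integrable_prod (d : ℕ) (g : Fin d → ℝ → ℝ) (hg : ∀ k, Integrable (g k)) :
    Integrable (fun x : EuclideanSpace ℝ (Fin d) => ∏ k, g k (x k)) volume := by
  have mp := (EuclideanSpace.volume_preserving_symm_measurableEquiv_toLp (Fin d)).symm
  rw [← mp.integrable_comp_emb (MeasurableEquiv.measurableEmbedding _)]
  exact MeasureTheory.Integrable.fintype_prod (f := g) hg



lemma gaussian_prod_integral (d : ℕ) (μ : EuclideanSpace ℝ (Fin d)) (g : Fin d → ℝ → ℝ) :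
    ∫ x, ∏ k, g k (x k) ∂(gaussian d μ)
      = ∏ k, ((Real.sqrt (2*Real.pi))⁻¹ * ∫ y : ℝ, g k y * Real.exp (-(y - μ k)^2/2)) := by
  rw [integral_gaussian_eq]
  have h : ∀ x : EuclideanSpace ℝ (Fin d), ρ d μ x * ∏ k, g k (x k)
      = ∏ k, ((Real.sqrt (2*Real.pi))⁻¹ * (g k (x k) * Real.exp (-(x k - μ k)^2/2))) := by
    intro x
    rw [ρ_prod, ← Finset.prod_mul_distrib]
    exact Finset.prod_congr rfl fun k _ => by ring
  simp_rw [h]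
  rw [euclid_integral_prod d (fun k y => (Real.sqrt (2*Real.pi))⁻¹ * (g k y * Real.exp (-(y - μ k)^2/2)))]
  exact Finset.prod_congr rfl fun k _ => by rw [integral_const_mul]

lemma gaussian_prod_integrable (d : ℕ) (μ : EuclideanSpace ℝ (Fin d)) (g : Fin d → ℝ → ℝ)
    (hg : ∀ k, Integrable (fun y : ℝ => g k y * Real.exp (-(y - μ k)^2/2))) :
    Integrable (fun x => ∏ k, g k (x k)) (gaussian d μ) := by
  rw [integrable_gaussian_iff]
  have h : ∀ x : EuclideanSpace ℝ (Fin d), ρ d μ x * ∏ k, g k (x k)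
      = ∏ k, ((Real.sqrt (2*Real.pi))⁻¹ * (g k (x k) * Real.exp (-(x k - μ k)^2/2))) := by
    intro x
    rw [ρ_prod, ← Finset.prod_mul_distrib]
    exact Finset.prod_congr rfl fun k _ => by ring
  simp_rw [h]
  exact euclid_integrable_prod d _ fun k => (hg k).const_mul _

lemma prod_coord (d : ℕ) (i j : Fin d) (x : EuclideanSpace ℝ (Fin d)) :
    x i * x j = ∏ k, ((if k = i then x k else 1) * (if k = j then x k else 1)) := by
  rw [Finset.prod_mul_distrib, Finset.prod_ite_eq' Finset.univ i, Finset.prod_ite_eq' Finset.univ j]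
  simp

lemma gaussian_moment_integrable (d : ℕ) (μ : EuclideanSpace ℝ (Fin d)) (i j : Fin d) :
    Integrable (fun x : EuclideanSpace ℝ (Fin d) => x i * x j) (gaussian d μ) := by
  have h := gaussian_prod_integrable d μ
    (fun k y => (if k = i then y else 1) * (if k = j then y else 1)) ?_
  · refine h.congr (Filter.Eventually.of_forall fun x => ?_)
    exact (prod_coord d i j x).symm
  · intro k
    by_cases hi : k = i
    · subst hi
      by_cases hj : k = j
      · subst hj
        simpa [← sq] using int_sq_exp_shift (μ k)
      · simpa [hj] using int_mul_exp_shift (μ k)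
    · by_cases hj : k = j
      · subst hj
        simpa [hi] using int_mul_exp_shift (μ k)
      · simpa [hi, hj] using int_exp_shift (μ k)

lemma sqrt2pi_ne : (Real.sqrt (2*Real.pi)) ≠ 0 := by positivity

lemma gaussian_moment (d : ℕ) (μ : EuclideanSpace ℝ (Fin d)) (i j : Fin d) :
    ∫ x, x i * x j ∂(gaussian d μ)
      = (if i = j then (1:ℝ) else 0) + μ i * μ j := by
  rw [show (fun x : EuclideanSpace ℝ (Fin d) => x i * x j)
      = (fun x : EuclideanSpace ℝ (Fin d) =>
          ∏ k, ((if k = i then x k else 1) * (if k = j then x k else 1)))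
    from funext (prod_coord d i j)]
  rw [gaussian_prod_integral d μ (fun k y => (if k = i then y else 1) * (if k = j then y else 1))]
  rcases eq_or_ne i j with rfl | hij
  · have hfac : ∀ k : Fin d, ((Real.sqrt (2*Real.pi))⁻¹ *
        ∫ y : ℝ, (if k = i then y else 1) * (if k = i then y else 1) * Real.exp (-(y - μ k)^2/2))
        = if k = i then 1 + μ i ^ 2 else 1 := by
      intro k
      by_cases hk : k = i
      · subst hk
        simp only [eq_self_iff_true, if_true]
        have he : (fun y : ℝ => y * y * Real.exp (-(y - μ k)^2/2))
            = fun y : ℝ => y^2 * Real.exp (-(y - μ k)^2/2) := by ext y; ring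
        rw [he, M2, mul_comm _ (Real.sqrt (2*Real.pi)), inv_mul_cancel_left₀ sqrt2pi_ne]
      · simp only [if_neg hk, one_mul, M0, inv_mul_cancel₀ sqrt2pi_ne]
    calc (∏ k, ((Real.sqrt (2*Real.pi))⁻¹ *
        ∫ y : ℝ, (if k = i then y else 1) * (if k = i then y else 1) * Real.exp (-(y - μ k)^2/2)))
        = ∏ k, (if k = i then 1 + μ i ^ 2 else (1:ℝ)) := Finset.prod_congr rfl fun k _ => hfac k
      _ = 1 + μ i ^ 2 := by rw [Finset.prod_ite_eq' Finset.univ i (fun _ => 1 + μ i ^ 2)]; simp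
      _ = (if i = i then (1:ℝ) else 0) + μ i * μ i := by simp [sq]
  · have hfac : ∀ k : Fin d, ((Real.sqrt (2*Real.pi))⁻¹ *
        ∫ y : ℝ, (if k = i then y else 1) * (if k = j then y else 1) * Real.exp (-(y - μ k)^2/2))
        = (if k = i then μ i else 1) * (if k = j then μ j else 1) := by
      intro k
      by_cases hi : k = i
      · subst hi
        have hj : ¬ k = j := fun h => hij (h ▸ rfl)
        simp only [eq_self_iff_true, if_true, if_neg hj, mul_one, M1]
        rw [mul_comm _ (Real.sqrt (2*Real.pi)), inv_mul_cancel_left₀ sqrt2pi_ne]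
      · by_cases hj : k = j
        · subst hj
          simp only [if_neg hi, eq_self_iff_true, if_true, one_mul, M1]
          rw [mul_comm _ (Real.sqrt (2*Real.pi)), inv_mul_cancel_left₀ sqrt2pi_ne]
        · simp only [if_neg hi, if_neg hj, one_mul, M0, inv_mul_cancel₀ sqrt2pi_ne]
    calc (∏ k, ((Real.sqrt (2*Real.pi))⁻¹ *
        ∫ y : ℝ, (if k = i then y else 1) * (if k = j then y else 1) * Real.exp (-(y - μ k)^2/2)))
        = ∏ k, ((if k = i then μ i else 1) * (if k = j then μ j else 1)) :=
          Finset.prod_congr rfl fun k _ => hfac k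
      _ = μ i * μ j := by
          rw [Finset.prod_mul_distrib, Finset.prod_ite_eq' Finset.univ i (fun _ => μ i),
            Finset.prod_ite_eq' Finset.univ j (fun _ => μ j)]
          simp
      _ = (if i = j then (1:ℝ) else 0) + μ i * μ j := by simp [hij]


lemma abs_tanh_le_one (x : ℝ) : |Real.tanh x| ≤ 1 := by
  rw [abs_le]
  constructor
  · have := tanh_lt_one' (-x); rw [Real.tanh_neg] at this; linarith
  · exact (tanh_lt_one' x).le

lemma rho_exp (d : ℕ) (θ₀ x : EuclideanSpace ℝ (Fin d)) :
    ρ d θ₀ x = ((2 * Real.pi) ^ (-(d : ℝ) / 2) *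
        Real.exp (-(‖x‖^2 + ‖θ₀‖^2)/2)) * Real.exp ⟪θ₀, x⟫
    ∧ ρ d (-θ₀) x = ((2 * Real.pi) ^ (-(d : ℝ) / 2) *
        Real.exp (-(‖x‖^2 + ‖θ₀‖^2)/2)) * Real.exp (-⟪θ₀, x⟫) := by
  unfold ρ
  constructor
  · rw [mul_assoc, ← Real.exp_add]
    congr 2
    rw [norm_sub_sq_real, real_inner_comm]
    ring
  · rw [mul_assoc, ← Real.exp_add]
    congr 2
    rw [norm_sub_sq_real, inner_neg_right, norm_neg, real_inner_comm]
    ring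

lemma mix_density_identity (d : ℕ) (θ₀ x : EuclideanSpace ℝ (Fin d)) (s : ℝ) :
    Real.tanh (s + ⟪θ₀, x⟫) *
        ((1 + Real.tanh s)/2 * ρ d θ₀ x + (1 - Real.tanh s)/2 * ρ d (-θ₀) x)
      = (1 + Real.tanh s)/2 * ρ d θ₀ x - (1 - Real.tanh s)/2 * ρ d (-θ₀) x := by
  obtain ⟨hP, hM⟩ := rho_exp d θ₀ x
  rw [hP, hM]
  have hk := key_identity s ⟪θ₀, x⟫
  set D := (2 * Real.pi) ^ (-(d : ℝ) / 2) * Real.exp (-(‖x‖^2 + ‖θ₀‖^2)/2)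
  linear_combination (D/2) * hk


/-- with `β > 1`, `m = tanh(βm)`, `m > 0` and `P_{θ₀}` the weighted mixture,
one has the matrix identity `E_{P_{θ₀}}[X Xᵀ tanh(βm + θ₀ᵀX)] = m(I_d + θ₀θ₀ᵀ)`
(stated entrywise). -/
theorem asymMix_xxT_tanh_mean (d : ℕ) (β m : ℝ) (θ₀ : EuclideanSpace ℝ (Fin d))
    (hβ : 1 < β) (hm : 0 < m) (hfix : m = Real.tanh (β * m)) (i j : Fin d) :
    ∫ x, x i * x j * Real.tanh (β * m + ⟪θ₀, x⟫) ∂(asymMix d θ₀ m)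
      = m * ((if i = j then (1 : ℝ) else 0) + θ₀ i * θ₀ j) := by
  have hm1 : m < 1 := by rw [hfix]; exact tanh_lt_one' (β * m)
  set f : EuclideanSpace ℝ (Fin d) → ℝ :=
    fun x => x i * x j * Real.tanh (β * m + ⟪θ₀, x⟫) with hf
  have hcont : Continuous f := by
    apply Continuous.mul
    · exact ((continuous_apply i).comp (PiLp.continuous_ofLp 2 fun _ : Fin d => ℝ)).mul
        ((continuous_apply j).comp (PiLp.continuous_ofLp 2 fun _ : Fin d => ℝ))
    · have htanh : Continuous Real.tanh := by
        have he : Real.tanh = fun x => Real.sinh x / Real.cosh x :=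
          funext fun x => Real.tanh_eq_sinh_div_cosh (x := x)
        rw [he]
        exact Real.continuous_sinh.div Real.continuous_cosh fun x => (Real.cosh_pos x).ne'
      exact htanh.comp (continuous_const.add (Continuous.inner continuous_const continuous_id))
  have hfg : ∀ μ : EuclideanSpace ℝ (Fin d), Integrable f (gaussian d μ) := by
    intro μ
    refine (gaussian_moment_integrable d μ i j).abs.mono' hcont.aestronglyMeasurable ?_
    refine Filter.Eventually.of_forall fun x => ?_
    calc ‖f x‖ = |x i * x j| * |Real.tanh (β * m + ⟪θ₀, x⟫)| := by
          rw [Real.norm_eq_abs, hf, abs_mul]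
      _ ≤ |x i * x j| * 1 := by
          exact mul_le_mul_of_nonneg_left (abs_tanh_le_one _) (abs_nonneg _)
      _ = |x i * x j| := mul_one _
  have wp0 : (0:ℝ) ≤ (1 + m) / 2 := by linarith
  have wm0 : (0:ℝ) ≤ (1 - m) / 2 := by linarith
  have hIf1 : Integrable (fun x => ρ d θ₀ x * f x) volume :=
    (integrable_gaussian_iff d θ₀ f).mp (hfg θ₀)
  have hIf2 : Integrable (fun x => ρ d (-θ₀) x * f x) volume :=
    (integrable_gaussian_iff d (-θ₀) f).mp (hfg (-θ₀))
  have hIh1 : Integrable (fun x => ρ d θ₀ x * (x i * x j)) volume :=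
    (integrable_gaussian_iff d θ₀ _).mp (gaussian_moment_integrable d θ₀ i j)
  have hIh2 : Integrable (fun x => ρ d (-θ₀) x * (x i * x j)) volume :=
    (integrable_gaussian_iff d (-θ₀) _).mp (gaussian_moment_integrable d (-θ₀) i j)
  have hpt : ∀ x : EuclideanSpace ℝ (Fin d),
      (1 + m) / 2 * (ρ d θ₀ x * f x) + (1 - m) / 2 * (ρ d (-θ₀) x * f x)
        = (1 + m) / 2 * (ρ d θ₀ x * (x i * x j))
          - (1 - m) / 2 * (ρ d (-θ₀) x * (x i * x j)) := by
    intro x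
    have h := mix_density_identity d θ₀ x (β * m)
    rw [← hfix] at h
    have hfx : f x = x i * x j * Real.tanh (β * m + ⟪θ₀, x⟫) := rfl
    rw [hfx]
    linear_combination (x i * x j) * h
  calc ∫ x, f x ∂(asymMix d θ₀ m)
      = (1 + m) / 2 * ∫ x, f x ∂(gaussian d θ₀)
        + (1 - m) / 2 * ∫ x, f x ∂(gaussian d (-θ₀)) := by
        rw [asymMix, integral_add_measure ((hfg θ₀).smul_measure ENNReal.ofReal_ne_top)
          ((hfg (-θ₀)).smul_measure ENNReal.ofReal_ne_top), integral_smul_measure,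
          integral_smul_measure, ENNReal.toReal_ofReal wp0, ENNReal.toReal_ofReal wm0,
          smul_eq_mul, smul_eq_mul]
    _ = (∫ x, (1 + m) / 2 * (ρ d θ₀ x * f x))
        + ∫ x, (1 - m) / 2 * (ρ d (-θ₀) x * f x) := by
        rw [integral_gaussian_eq, integral_gaussian_eq, integral_const_mul, integral_const_mul]
    _ = ∫ x, ((1 + m) / 2 * (ρ d θ₀ x * f x) + (1 - m) / 2 * (ρ d (-θ₀) x * f x)) := by
        rw [← integral_add (hIf1.const_mul _) (hIf2.const_mul _)]
    _ = ∫ x, ((1 + m) / 2 * (ρ d θ₀ x * (x i * x j))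
          - (1 - m) / 2 * (ρ d (-θ₀) x * (x i * x j))) := by
        exact integral_congr_ae (Filter.Eventually.of_forall hpt)
    _ = (∫ x, (1 + m) / 2 * (ρ d θ₀ x * (x i * x j)))
        - ∫ x, (1 - m) / 2 * (ρ d (-θ₀) x * (x i * x j)) := by
        rw [integral_sub (hIh1.const_mul _) (hIh2.const_mul _)]
    _ = (1 + m) / 2 * ∫ x, x i * x j ∂(gaussian d θ₀)
        - (1 - m) / 2 * ∫ x, x i * x j ∂(gaussian d (-θ₀)) := by
        rw [integral_const_mul, integral_const_mul, ← integral_gaussian_eq, ← integral_gaussian_eq]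
    _ = (1 + m) / 2 * ((if i = j then (1:ℝ) else 0) + θ₀ i * θ₀ j)
        - (1 - m) / 2 * ((if i = j then (1:ℝ) else 0) + θ₀ i * θ₀ j) := by
        rw [gaussian_moment, gaussian_moment]
        have h1 : (-θ₀ : EuclideanSpace ℝ (Fin d)) i = -(θ₀ i) := rfl
        have h2 : (-θ₀ : EuclideanSpace ℝ (Fin d)) j = -(θ₀ j) := rfl
        rw [h1, h2]
        ring_nf
    _ = m * ((if i = j then (1 : ℝ) else 0) + θ₀ i * θ₀ j) := by ring
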